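/- Let R be an integral domain with field of fractions K, and let C̃ be an S-complex over R. Then the Frøyshov invariant is unchanged under base change to the field of fractions: h(C̃ ⊗_R K) = h(C̃), where C̃ ⊗_R K is the S-complex over K obtained by tensoring C and all structure maps with K. -/

import Mathlib

/-!  S-complexes over a commutative ring `R` (following Daemi–Scaduto).

An S-complex is a ℤ-graded finitely generated free chain complex
`C̃ = C ⊕ C[1] ⊕ R` determined by the data of `C` together with maps
`d, v, δ₁, δ₂`.  We encode the graded module `C` by a single module `Tot`
together with an internal ℤ-grading by submodules, and we carry the sign
map `ε` (multiplication by `(-1)^i` on the degree `i` part) as data. -/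

universe u

/-- The data of an S-complex over `R`: a module `Tot` (the total module of the
ℤ-graded module `C_*`), its grading, the sign map `ε`, and the structure maps
`d : C_* → C_{*-1}`, `v : C_* → C_{*-2}`, `δ₁ : C_* → R` (supported in degree 1),
`δ₂ : R → C_{-2}`. -/
structure SComplexData (R : Type u) [CommRing R] where
  Tot : Type u
  [acg : AddCommGroup Tot]
  [mod : Module R Tot]
  grading : ℤ → Submodule R Tot
  sign : Tot →ₗ[R] Tot
  d : Tot →ₗ[R] Tot
  v : Tot →ₗ[R] Tot
  δ₁ : Tot →ₗ[R] R
  δ₂ : R →ₗ[R] Tot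

attribute [instance] SComplexData.acg SComplexData.mod

namespace SComplexData

variable {R : Type u} [CommRing R]

/-- The axioms making the data of `X : SComplexData R` into a genuine S-complex:
the grading is an internal direct sum decomposition into finitely generated free
pieces, the sign map is `(-1)^i` on the degree `i` piece, the structure maps are
graded of the appropriate degrees (`δ₁` supported on `C_1`, `δ₂` valued in `C_{-2}`),
and the S-complex relations `d∘d = 0`, `δ₁∘d = 0`, `d∘δ₂ = 0`,
`d∘v − v∘d − δ₂∘δ₁ = 0` hold; the latter are equivalent to `d̃ ∘ d̃ = 0` for the
differential `d̃(α, β, r) = (dα, vα − dβ + δ₂ r, δ₁ α)` on `C̃ = C ⊕ C[1] ⊕ R`. -/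
structure IsSComplex (X : SComplexData R) : Prop where
  internal : DirectSum.IsInternal X.grading
  free : ∀ i : ℤ, Module.Free R ↥(X.grading i)
  finite : Module.Finite R X.Tot
  sign_spec : ∀ i : ℤ, ∀ x ∈ X.grading i, X.sign x = if Even i then x else -x
  d_deg : ∀ i : ℤ, (X.grading i).map X.d ≤ X.grading (i - 1)
  v_deg : ∀ i : ℤ, (X.grading i).map X.v ≤ X.grading (i - 2)
  δ₁_deg : ∀ i : ℤ, i ≠ 1 → ∀ x ∈ X.grading i, X.δ₁ x = 0
  δ₂_deg : LinearMap.range X.δ₂ ≤ X.grading (-2)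
  d_d : X.d ∘ₗ X.d = 0
  δ₁_d : X.δ₁ ∘ₗ X.d = 0
  d_δ₂ : X.d ∘ₗ X.δ₂ = 0
  d_v : X.d ∘ₗ X.v - X.v ∘ₗ X.d - X.δ₂ ∘ₗ X.δ₁ = 0

/-- A morphism of S-complexes `λ̃ : C̃ → C̃'`, i.e. a degree-0 chain map
`λ̃(α, β, r) = (λ α, μ α + λ β + Δ₂ r, Δ₁ α + r)`, recorded through its
components `λ, μ, Δ₁, Δ₂` (here `l` stands for `λ`). -/
structure SMorphism (X Y : SComplexData R) where
  l : X.Tot →ₗ[R] Y.Tot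
  μ : X.Tot →ₗ[R] Y.Tot
  Δ₁ : X.Tot →ₗ[R] R
  Δ₂ : R →ₗ[R] Y.Tot
  l_deg : ∀ i : ℤ, (X.grading i).map l ≤ Y.grading i
  μ_deg : ∀ i : ℤ, (X.grading i).map μ ≤ Y.grading (i - 1)
  Δ₁_deg : ∀ i : ℤ, i ≠ 0 → ∀ x ∈ X.grading i, Δ₁ x = 0
  Δ₂_deg : LinearMap.range Δ₂ ≤ Y.grading (-1)
  comm_d : l ∘ₗ X.d = Y.d ∘ₗ l
  comm_δ₁ : Δ₁ ∘ₗ X.d + X.δ₁ = Y.δ₁ ∘ₗ l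
  comm_δ₂ : Y.d ∘ₗ Δ₂ + l ∘ₗ X.δ₂ = Y.δ₂
  comm_v : μ ∘ₗ X.d + Y.d ∘ₗ μ + l ∘ₗ X.v - Y.v ∘ₗ l + Δ₂ ∘ₗ X.δ₁ - Y.δ₂ ∘ₗ Δ₁ = 0

end SComplexData

/-- Functions `ℕ → M` with finitely many nonzero values (i.e. support bounded
above); this realizes the polynomial module `M[x]`. -/
def NatBdd (R : Type u) [CommRing R] (M : Type u) [AddCommGroup M] [Module R M] :
    Submodule R (ℕ → M) where
  carrier := {f | ∃ N : ℕ, ∀ n : ℕ, N < n → f n = 0}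
  add_mem' := by
    rintro f g ⟨N, hN⟩ ⟨K, hK⟩
    refine ⟨max N K, fun n hn => ?_⟩
    have h1 := hN n (lt_of_le_of_lt (le_max_left N K) hn)
    have h2 := hK n (lt_of_le_of_lt (le_max_right N K) hn)
    show f n + g n = 0
    rw [h1, h2, add_zero]
  zero_mem' := ⟨0, fun _ _ => rfl⟩
  smul_mem' := by
    rintro c f ⟨N, hN⟩
    refine ⟨N, fun n hn => ?_⟩
    show c • f n = 0
    rw [hN n hn, smul_zero]

/-- Functions `ℤ → M` with support bounded above; for `M = R` this realizes the
ring `R[[x⁻¹, x]]` of Laurent series with finitely many positive powers of `x`. -/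
def IntBdd (R : Type u) [CommRing R] (M : Type u) [AddCommGroup M] [Module R M] :
    Submodule R (ℤ → M) where
  carrier := {f | ∃ N : ℤ, ∀ n : ℤ, N < n → f n = 0}
  add_mem' := by
    rintro f g ⟨N, hN⟩ ⟨K, hK⟩
    refine ⟨max N K, fun n hn => ?_⟩
    have h1 := hN n (lt_of_le_of_lt (le_max_left N K) hn)
    have h2 := hK n (lt_of_le_of_lt (le_max_right N K) hn)
    show f n + g n = 0
    rw [h1, h2, add_zero]
  zero_mem' := ⟨0, fun _ _ => rfl⟩
  smul_mem' := by
    rintro c f ⟨N, hN⟩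
    refine ⟨N, fun n hn => ?_⟩
    show c • f n = 0
    rw [hN n hn, smul_zero]

/-- The multiplication of `R[[x⁻¹, x]]`, realized as a convolution product on
functions `ℤ → R` with support bounded above. -/
noncomputable def lmul {R : Type u} [CommRing R] (f g : ↥(IntBdd R R)) : ↥(IntBdd R R) :=
  ⟨fun n => ∑ᶠ i : ℤ, f.1 i * g.1 (n - i), by
    obtain ⟨N, hN⟩ := f.2
    obtain ⟨K, hK⟩ := g.2
    refine ⟨N + K, fun n hn => ?_⟩
    apply finsum_eq_zero_of_forall_eq_zero
    intro i
    by_cases h : N < i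
    · rw [hN i h, zero_mul]
    · rw [hK (n - i) (by omega), mul_zero]⟩

namespace SComplexData

variable {R : Type u} [CommRing R]

/-- The carrier of the small equivariant complex `𝔣Ĉ_* = C_{*-1} ⊕ R[x]`,
with `R[x]` realized as finitely supported functions `ℕ → R`. -/
abbrev Small (X : SComplexData R) : Type u := X.Tot × ↥(NatBdd R R)

/-- `Σᵢ vⁱ δ₂(aᵢ)` for a polynomial with coefficients `aᵢ`. -/
noncomputable def sumV (X : SComplexData R) (f : ↥(NatBdd R R)) : X.Tot :=
  ∑ᶠ i : ℕ, (X.v ^ i) (X.δ₂ (f.1 i))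

/-- The differential `𝔡̂(α, Σᵢ aᵢxⁱ) = (dα − Σᵢ vⁱδ₂(aᵢ), 0)` of the small
equivariant complex. -/
noncomputable def smallD (X : SComplexData R) : X.Small → X.Small :=
  fun z => (X.d z.1 - X.sumV z.2, 0)

/-- The `R[x]`-module structure of the small equivariant complex:
`x · (α, p(x)) = (v(α), δ₁(α) + x·p(x))`; this is the action of `x`. -/
noncomputable def xSmall (X : SComplexData R) : X.Small → X.Small :=
  fun z => (X.v z.1, ⟨fun n => if n = 0 then X.δ₁ z.1 else z.2.1 (n - 1), by
    obtain ⟨N, hN⟩ := z.2.2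
    refine ⟨N + 1, fun n hn => ?_⟩
    show (if n = 0 then X.δ₁ z.1 else z.2.1 (n - 1)) = 0
    rw [if_neg (by omega)]
    exact hN (n - 1) (by omega)⟩)

/-- The map `𝔦 : 𝔣Ĉ_* → R[[x⁻¹, x]]`,
`𝔦(α, Σᵢ aᵢxⁱ) = Σ_{i ≤ −1} δ₁v^{−i−1}(α) xⁱ + Σᵢ aᵢxⁱ`. -/
noncomputable def iota (X : SComplexData R) : X.Small → ↥(IntBdd R R) :=
  fun z => ⟨fun n => if n < 0 then X.δ₁ ((X.v ^ (-n - 1).toNat) z.1) else z.2.1 n.toNat, by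
    obtain ⟨N, hN⟩ := z.2.2
    refine ⟨(N : ℤ), fun n hn => ?_⟩
    show (if n < 0 then X.δ₁ ((X.v ^ (-n - 1).toNat) z.1) else z.2.1 n.toNat) = 0
    rw [if_neg (by omega)]
    exact hN n.toNat (by omega)⟩

/-- `𝔍(C̃) = 𝔦(ker 𝔡̂)`, an `R[x]`-submodule of `R[[x⁻¹, x]]`, here recorded
as a set. -/
noncomputable def JJ (X : SComplexData R) : Set ↥(IntBdd R R) :=
  X.iota '' {z | X.smallD z = 0}

/-- `DegEq Q n` means that the Laurent series `Q` is nonzero with `Deg Q = n`,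
i.e. `n` is the largest exponent with nonzero coefficient. -/
def DegEq {R : Type u} [CommRing R] (Q : ↥(IntBdd R R)) (n : ℤ) : Prop :=
  Q.1 n ≠ 0 ∧ ∀ m : ℤ, n < m → Q.1 m = 0

/-- The set of degrees of nonzero elements of `𝔍(C̃)`. -/
noncomputable def degSet (X : SComplexData R) : Set ℤ :=
  {n : ℤ | ∃ Q ∈ X.JJ, DegEq Q n}

/-- The Frøyshov invariant `h(C̃) = −inf {Deg Q : 0 ≠ Q ∈ 𝔍(C̃)}`. -/
noncomputable def hInv (X : SComplexData R) : ℤ := -sInf X.degSet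

/-- The ideal `J_i(C̃) = {a ∈ R : ∃ Q = a·x^{−i} + (lower order terms) ∈ 𝔍(C̃)}`,
recorded as a set. -/
noncomputable def Jideal (X : SComplexData R) (i : ℤ) : Set R :=
  {a : R | ∃ Q ∈ X.JJ, (∀ m : ℤ, -i < m → Q.1 m = 0) ∧ Q.1 (-i) = a}

end SComplexData

namespace SComplexData

open TensorProduct

variable {R : Type u} [CommRing R]

/-- The base change `C̃ ⊗_R S` of an S-complex along an `R`-algebra `S`:
the chain module and all structure maps are tensored with `S`. -/
noncomputable def baseChange (A : SComplexData R) (S : Type u) [CommRing S] [Algebra R S] :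
    SComplexData S where
  Tot := S ⊗[R] A.Tot
  grading := fun i => Submodule.baseChange S (A.grading i)
  sign := A.sign.baseChange S
  d := A.d.baseChange S
  v := A.v.baseChange S
  δ₁ := LinearMap.liftBaseChange S ((Algebra.linearMap R S) ∘ₗ A.δ₁)
  δ₂ := LinearMap.toSpanSingleton S (S ⊗[R] A.Tot) ((1 : S) ⊗ₜ[R] A.δ₂ 1)

end SComplexData
section AuxSt19

open TensorProduct

namespace SComplexData

variable {R : Type u} [CommRing R]

lemma sumV_eq_sum (X : SComplexData R) (f : ↥(NatBdd R R)) (N : ℕ)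
    (h : ∀ n, N < n → f.1 n = 0) :
    X.sumV f = ∑ i ∈ Finset.range (N + 1), (X.v ^ i) (X.δ₂ (f.1 i)) := by
  refine finsum_eq_sum_of_support_subset _ ?_
  intro i hi
  simp only [Function.mem_support, ne_eq] at hi
  simp only [Finset.coe_range, Set.mem_Iio]
  by_contra hc
  push_neg at hc
  exact hi (by rw [h i (by omega), map_zero, map_zero])

lemma sumV_mul (X : SComplexData R) (c : R) (f g : ↥(NatBdd R R)) (N : ℕ)
    (hNf : ∀ n, N < n → f.1 n = 0)
    (hg : ∀ n, g.1 n = c * f.1 n) :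
    X.sumV g = c • X.sumV f := by
  rw [X.sumV_eq_sum f N hNf, X.sumV_eq_sum g N (fun n hn => by rw [hg, hNf n hn, mul_zero]),
    Finset.smul_sum]
  refine Finset.sum_congr rfl fun i _ => ?_
  rw [hg i, show c * f.1 i = c • f.1 i from rfl, map_smul, map_smul]

variable {S : Type u} [CommRing S] [Algebra R S]

lemma bc_d (A : SComplexData R) (x : A.Tot) :
    (A.baseChange S).d ((1 : S) ⊗ₜ[R] x) = (1 : S) ⊗ₜ[R] A.d x :=
  LinearMap.baseChange_tmul _ _ _

lemma bc_v_pow (A : SComplexData R) (i : ℕ) (x : A.Tot) :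
    ((A.baseChange S).v ^ i) ((1 : S) ⊗ₜ[R] x) = (1 : S) ⊗ₜ[R] ((A.v ^ i) x) := by
  induction i generalizing x with
  | zero => simp; rfl
  | succ k ih =>
    rw [pow_succ]
    show ((A.baseChange S).v ^ k) ((A.baseChange S).v ((1:S) ⊗ₜ[R] x)) = _
    rw [pow_succ, Module.End.mul_apply,
      show (A.baseChange S).v ((1:S) ⊗ₜ[R] x) = (1:S) ⊗ₜ[R] A.v x from
        LinearMap.baseChange_tmul _ _ _, ih (A.v x)]

lemma bc_δ₁ (A : SComplexData R) (x : A.Tot) :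
    (A.baseChange S).δ₁ ((1 : S) ⊗ₜ[R] x) = algebraMap R S (A.δ₁ x) := by
  show LinearMap.liftBaseChange S ((Algebra.linearMap R S) ∘ₗ A.δ₁) ((1:S) ⊗ₜ[R] x) = _
  rw [LinearMap.liftBaseChange_tmul]
  simp

lemma bc_δ₂ (A : SComplexData R) (r : R) :
    (A.baseChange S).δ₂ (algebraMap R S r) = (1 : S) ⊗ₜ[R] A.δ₂ r := by
  show LinearMap.toSpanSingleton S (S ⊗[R] A.Tot) ((1:S) ⊗ₜ[R] A.δ₂ 1) (algebraMap R S r) = _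
  rw [LinearMap.toSpanSingleton_apply, algebraMap_smul, ← TensorProduct.tmul_smul,
    ← map_smul, smul_eq_mul, mul_one]

lemma bc_sumV (A : SComplexData R) (f : ↥(NatBdd R R)) (g : ↥(NatBdd S S))
    (hg : ∀ n, g.1 n = algebraMap R S (f.1 n)) :
    (A.baseChange S).sumV g = (1 : S) ⊗ₜ[R] A.sumV f := by
  obtain ⟨N, hN⟩ := f.2
  rw [A.sumV_eq_sum f N hN,
    (A.baseChange S).sumV_eq_sum g N (fun n hn => by rw [hg, hN n hn, map_zero]),
    TensorProduct.tmul_sum]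
  refine Finset.sum_congr rfl fun i _ => ?_
  rw [hg i, bc_δ₂, bc_v_pow]

end SComplexData
end AuxSt19

open TensorProduct in
lemma SComplexData.oneTmul_inj {R K : Type u} [CommRing R] [IsDomain R] [Field K]
    [Algebra R K] [IsFractionRing R K] (A : SComplexData R) (hA : A.IsSComplex) :
    Function.Injective (fun x : A.Tot => (1 : K) ⊗ₜ[R] x) := by
  haveI : Module.Free R A.Tot :=
    Module.Free.of_basis (hA.internal.collectedBasis
      (fun i => @Module.Free.chooseBasis R ↥(A.grading i) _ _ _ (hA.free i)))
  have h1 : Function.Injective (LinearMap.rTensor A.Tot (Algebra.linearMap R K)) :=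
    Module.Flat.rTensor_preserves_injective_linearMap _ (IsFractionRing.injective R K)
  have h2 : (fun x : A.Tot => (1 : K) ⊗ₜ[R] x)
      = (LinearMap.rTensor A.Tot (Algebra.linearMap R K)) ∘
        fun x => ((TensorProduct.lid R A.Tot).symm x) := by
    funext x; simp [TensorProduct.lid_symm_apply]
  rw [h2]
  exact h1.comp (TensorProduct.lid R A.Tot).symm.injective

open SComplexData TensorProduct in
/-- **Statement 19.** For an S-complex over an integral domain `R` with field of
fractions `K`, the Frøyshov invariant is unchanged under base change to `K`:
`h(C̃ ⊗_R K) = h(C̃)`. -/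
theorem statement19 {R K : Type u} [CommRing R] [IsDomain R]
    [Field K] [Algebra R K] [IsFractionRing R K]
    (A : SComplexData R) (hA : A.IsSComplex) :
    (A.baseChange K).hInv = A.hInv := by
  classical
  have halg : Function.Injective (algebraMap R K) := IsFractionRing.injective R K
  have hinj := A.oneTmul_inj (K := K) hA
  suffices hset : (A.baseChange K).degSet = A.degSet by
    show -sInf (A.baseChange K).degSet = -sInf A.degSet
    rw [hset]
  ext n
  simp only [degSet, JJ, Set.mem_setOf_eq, Set.mem_image]
  constructor
  · -- K side → R side : clear denominators
    rintro ⟨Q, ⟨z, hz, rfl⟩, hQ⟩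
    obtain ⟨hQne, hQtop⟩ : _ ∧ _ := hQ
    obtain ⟨β, q⟩ := z
    have hkerK : (A.baseChange K).d β = (A.baseChange K).sumV q := by
      have := congrArg Prod.fst hz
      simpa [smallD, sub_eq_zero] using this
    obtain ⟨N, hN⟩ := q.2
    obtain ⟨Sfin, hS⟩ := TensorProduct.exists_finset β
    obtain ⟨b₁, hb₁⟩ := IsLocalization.exist_integer_multiples (nonZeroDivisors R) Sfin
      (fun p => p.1)
    obtain ⟨b₂, hb₂⟩ := IsLocalization.exist_integer_multiples (nonZeroDivisors R)
      (Finset.range (N + 1)) (fun i => q.1 i)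
    set r : R := (b₁ : R) * (b₂ : R) with hr
    have hr0 : r ≠ 0 := mem_nonZeroDivisors_iff_ne_zero.mp (mul_mem b₁.2 b₂.2)
    have hrK : algebraMap R K r ≠ 0 := (map_ne_zero_iff (algebraMap R K) halg).mpr hr0
    have key1 : ∀ p ∈ Sfin, ∃ a : R, algebraMap R K a = algebraMap R K r * p.1 := by
      intro p hp
      obtain ⟨a, ha⟩ := hb₁ p hp
      refine ⟨(b₂ : R) * a, ?_⟩
      rw [map_mul, ha, Algebra.smul_def, hr, map_mul]
      ring
    choose aa haa using key1
    have key2 : ∀ m : ℕ, ∃ c : R, algebraMap R K c = algebraMap R K r * q.1 m := by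
      intro m
      by_cases hm : m ≤ N
      · obtain ⟨c, hc⟩ := hb₂ m (Finset.mem_range.mpr (by omega))
        exact ⟨(b₁ : R) * c, by rw [map_mul, hc, Algebra.smul_def, hr, map_mul]; ring⟩
      · exact ⟨0, by rw [map_zero, hN m (by omega), mul_zero]⟩
    choose cc hcc using key2
    have hccz : ∀ m, N < m → cc m = 0 := fun m hm =>
      halg (by rw [hcc, hN m hm, mul_zero, map_zero])
    let β' : A.Tot := ∑ p ∈ Sfin.attach, aa p.1 p.2 • p.1.2
    let q' : ↥(NatBdd R R) := ⟨fun m => cc m, ⟨N, hccz⟩⟩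
    let qK : ↥(NatBdd K K) := ⟨fun m => algebraMap R K (cc m), ⟨N, fun m hm => by
      show algebraMap R K (cc m) = 0
      rw [hccz m hm, map_zero]⟩⟩
    have hβ' : (1 : K) ⊗ₜ[R] β' = algebraMap R K r • β := by
      change (1 : K) ⊗ₜ[R] β' = @HSMul.hSMul K (K ⊗[R] A.Tot) (K ⊗[R] A.Tot) _ (algebraMap R K r) β
      rw [hS, Finset.smul_sum,
        show β' = ∑ p ∈ Sfin.attach, aa p.1 p.2 • p.1.2 from rfl,
        TensorProduct.tmul_sum,
        ← Finset.sum_attach Sfin (fun p => algebraMap R K r • (p.1 ⊗ₜ[R] p.2))]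
      refine Finset.sum_congr rfl fun p _ => ?_
      rw [TensorProduct.tmul_smul, TensorProduct.smul_tmul', TensorProduct.smul_tmul']
      congr 1
      rw [Algebra.smul_def, mul_one, haa p.1 p.2, smul_eq_mul]
    have e1 : (A.baseChange K).sumV qK = (1 : K) ⊗ₜ[R] A.sumV q' :=
      bc_sumV A q' qK (fun m => rfl)
    have e2 : (A.baseChange K).sumV qK = algebraMap R K r • (A.baseChange K).sumV q :=
      (A.baseChange K).sumV_mul _ q qK N hN hcc
    have hkerR : A.d β' - A.sumV q' = 0 := by
      apply hinj
      show (1 : K) ⊗ₜ[R] (A.d β' - A.sumV q') = (1 : K) ⊗ₜ[R] (0 : A.Tot)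
      rw [TensorProduct.tmul_sub, TensorProduct.tmul_zero, ← bc_d (S := K), ← e1, e2, hβ',
        map_smul, hkerK]
      exact sub_self _
    have hz' : A.smallD (β', q') = 0 := by
      show (A.d β' - A.sumV q', (0 : ↥(NatBdd R R))) = 0
      rw [hkerR]; rfl
    have hco : ∀ m : ℤ, algebraMap R K ((A.iota (β', q')).1 m)
        = algebraMap R K r * (((A.baseChange K).iota (β, q)).1 m) := by
      intro m
      simp only [iota]
      by_cases hm : m < 0
      · rw [if_pos hm, if_pos hm, ← bc_δ₁ (S := K), ← bc_v_pow (S := K), hβ', map_smul,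
          map_smul, smul_eq_mul]
      · rw [if_neg hm, if_neg hm]
        exact hcc m.toNat
    refine ⟨A.iota (β', q'), ⟨(β', q'), hz', rfl⟩, ?_, ?_⟩
    · intro h0
      have := hco n
      rw [h0, map_zero] at this
      exact hQne ((mul_eq_zero.mp this.symm).resolve_left hrK)
    · intro m hm
      apply halg
      rw [hco m, hQtop m hm, mul_zero, map_zero]
  · -- R side → K side : extend scalars
    rintro ⟨Q, ⟨z, hz, rfl⟩, hQ⟩
    obtain ⟨hQne, hQtop⟩ : _ ∧ _ := hQ
    obtain ⟨α, p⟩ := z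
    have hker : A.d α = A.sumV p := by
      have := congrArg Prod.fst hz
      simpa [smallD, sub_eq_zero] using this
    let pK : ↥(NatBdd K K) := ⟨fun m => algebraMap R K (p.1 m), by
      obtain ⟨N, hN⟩ := p.2
      exact ⟨N, fun m hm => by
        show algebraMap R K (p.1 m) = 0
        rw [hN m hm, map_zero]⟩⟩
    have hzK : (A.baseChange K).smallD ((1 : K) ⊗ₜ[R] α, pK) = 0 := by
      show ((A.baseChange K).d ((1 : K) ⊗ₜ[R] α) - (A.baseChange K).sumV pK,
        (0 : ↥(NatBdd K K))) = 0
      rw [bc_d, bc_sumV A p pK (fun m => rfl), hker]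
      show ((1:K) ⊗ₜ[R] A.sumV p - (1:K) ⊗ₜ[R] A.sumV p, (0 : ↥(NatBdd K K))) = 0
      rw [sub_self]
      rfl
    have hco : ∀ m : ℤ, (((A.baseChange K).iota ((1 : K) ⊗ₜ[R] α, pK)).1 m)
        = algebraMap R K ((A.iota (α, p)).1 m) := by
      intro m
      simp only [iota]
      by_cases hm : m < 0
      · rw [if_pos hm, if_pos hm, bc_v_pow, bc_δ₁]
      · rw [if_neg hm, if_neg hm]
    exact ⟨_, ⟨((1 : K) ⊗ₜ[R] α, pK), hzK, rfl⟩,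
      fun h0 => hQne (halg (by rw [← hco n, h0, map_zero])),
      fun m hm => by rw [hco m, hQtop m hm, map_zero]⟩
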